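/- Let X be a nonempty set and let A be a unital complex subalgebra of the algebra of all bounded functions X → ℂ which is closed under pointwise complex conjugation and has the property that for every real-valued Φ ∈ A and every real number c > sup_{x∈X} |Φ(x)|, the function x ↦ √(c − Φ(x)) again belongs to A. Suppose ω : A → ℂ is a linear functional satisfying ω(conj Ψ) = conj(ω(Ψ)), ω((conj Ψ)·Ψ) ≥ 0 for every Ψ ∈ A, and ω(1) = 1. Then |ω(Ψ)| ≤ 2·sup_{x∈X}|Ψ(x)| for every Ψ ∈ A. (Consequently ω is continuous for the sup norm.) -/

import Mathlib

open scoped ComplexOrder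

/-- **Lemma 3.1 (abstract form).** Let `X` be a nonempty set and `A` a unital complex
subalgebra of the bounded functions `X → ℂ`, closed under pointwise complex conjugation,
such that for every real-valued `Φ ∈ A` and every real `c > sup |Φ|` the function
`x ↦ √(c − Φ x)` again belongs to `A`.  If `ω` is a linear functional on `A` with
`ω (conj Ψ) = conj (ω Ψ)`, `ω ((conj Ψ)·Ψ) ≥ 0` and `ω 1 = 1`, then
`|ω Ψ| ≤ 2 · sup_x |Ψ x|` for all `Ψ ∈ A`. -/
theorem uniqLQG.state_bounded_by_twice_sup_norm
    {X : Type*} [Nonempty X] (A : Subalgebra ℂ (X → ℂ))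
    (hbdd : ∀ Ψ ∈ A, ∃ C : ℝ, ∀ x : X, ‖Ψ x‖ ≤ C)
    (hconj : ∀ Ψ ∈ A, (fun x => (starRingEnd ℂ) (Ψ x)) ∈ A)
    (hsqrt : ∀ Φ ∈ A, (∀ x : X, (Φ x).im = 0) →
      ∀ c : ℝ, (⨆ x : X, ‖Φ x‖) < c →
        (fun x => (Real.sqrt (c - (Φ x).re) : ℂ)) ∈ A)
    (ω : (X → ℂ) → ℂ)
    (hlin : ∀ α : ℂ, ∀ Ψ ∈ A, ∀ Ψ' ∈ A, ω (α • Ψ + Ψ') = α * ω Ψ + ω Ψ')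
    (hstar : ∀ Ψ ∈ A, ω (fun x => (starRingEnd ℂ) (Ψ x)) = (starRingEnd ℂ) (ω Ψ))
    (hpos : ∀ Ψ ∈ A, 0 ≤ ω (fun x => (starRingEnd ℂ) (Ψ x) * Ψ x))
    (hone : ω 1 = 1) :
    ∀ Ψ ∈ A, ‖ω Ψ‖ ≤ 2 * ⨆ x : X, ‖Ψ x‖ := by
  -- basic linearity facts
  have hω0 : ω 0 = 0 := by
    have h := hlin 1 0 A.zero_mem 0 A.zero_mem
    simpa using h
  have hsmul : ∀ α : ℂ, ∀ Φ ∈ A, ω (α • Φ) = α * ω Φ := by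
    intro α Φ hΦ
    have h := hlin α Φ hΦ 0 A.zero_mem
    simpa [hω0] using h
  -- the key claim for real-valued elements
  have hreal : ∀ Φ ∈ A, (∀ x, (Φ x).im = 0) →
      ‖ω Φ‖ ≤ ⨆ x : X, ‖Φ x‖ := by
    intro Φ hΦ him
    obtain ⟨C, hC⟩ := hbdd Φ hΦ
    have hbA : BddAbove (Set.range fun x => ‖Φ x‖) :=
      ⟨C, by rintro _ ⟨x, rfl⟩; exact hC x⟩
    set M : ℝ := ⨆ x : X, ‖Φ x‖ with hM
    have hMle : ∀ x, ‖Φ x‖ ≤ M := fun x => le_ciSup hbA x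
    -- ω Φ is real
    have hΦconj : (fun x => (starRingEnd ℂ) (Φ x)) = Φ := by
      funext x
      exact Complex.conj_eq_iff_im.2 (him x)
    have himω : (ω Φ).im = 0 := by
      have h := hstar Φ hΦ
      rw [hΦconj] at h
      exact Complex.conj_eq_iff_im.1 h.symm
    -- for every real-valued Θ ∈ A with sup < c we get ω Θ ≤ c
    have key : ∀ Θ, Θ ∈ A → (∀ x, (Θ x).im = 0) → (∀ x, ‖Θ x‖ ≤ M) →
        ∀ c : ℝ, M < c → (ω Θ).re ≤ c := by
      intro Θ hΘ himΘ hΘM c hc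
      have hsupΘ : (⨆ x : X, ‖Θ x‖) < c :=
        lt_of_le_of_lt (ciSup_le hΘM) hc
      have hS := hsqrt Θ hΘ himΘ c hsupΘ
      set S : X → ℂ := fun x => (Real.sqrt (c - (Θ x).re) : ℂ) with hSdef
      have hSS : (fun x => (starRingEnd ℂ) (S x) * S x)
          = (c : ℂ) • (1 : X → ℂ) + (-1 : ℂ) • Θ := by
        funext x
        have hxle : (Θ x).re ≤ c := by
          calc (Θ x).re ≤ ‖Θ x‖ := Complex.re_le_norm _
            _ ≤ M := hΘM x
            _ ≤ c := hc.le
        have h1 : (starRingEnd ℂ) (S x) = S x := by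
          simp [hSdef, Complex.conj_ofReal]
        have h2 : (Real.sqrt (c - (Θ x).re)) * (Real.sqrt (c - (Θ x).re))
            = c - (Θ x).re := Real.mul_self_sqrt (by linarith)
        have h3 : Θ x = ((Θ x).re : ℂ) := by
          apply Complex.ext <;> simp [himΘ x]
        simp only [hSdef, h1, Complex.conj_ofReal, Pi.add_apply, Pi.smul_apply, Pi.one_apply, smul_eq_mul]
        rw [← Complex.ofReal_mul, h2]
        push_cast
        rw [← h3]
        ring
      have hpos' := hpos S hS
      rw [hSS] at hpos'
      have hnegΘ : (-1 : ℂ) • Θ ∈ A := A.smul_mem hΘ _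
      rw [hlin (c : ℂ) 1 A.one_mem _ hnegΘ, hone, hsmul (-1) Θ hΘ] at hpos'
      have := (Complex.le_def.1 hpos').1
      simp at this
      linarith
    have hnegΦ : (-1 : ℂ) • Φ ∈ A := A.smul_mem hΦ _
    have h1 := key Φ hΦ him hMle
    have h2 := key ((-1 : ℂ) • Φ) hnegΦ (by intro x; simp [him x]) (by intro x; simpa using hMle x)
    have hωneg : (ω ((-1 : ℂ) • Φ)).re = -(ω Φ).re := by
      rw [hsmul (-1) Φ hΦ]; simp
    rw [hωneg] at h2
    have habs : ‖ω Φ‖ = |(ω Φ).re| := by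
      have hr : ω Φ = ((ω Φ).re : ℂ) := Complex.ext rfl (by simp [himω])
      rw [hr, Complex.norm_real]
      simp
    rw [habs, abs_le]
    constructor
    · by_contra h
      push_neg at h
      have : -(ω Φ).re ≤ (-(ω Φ).re + M) / 2 := h2 _ (by linarith)
      linarith
    · by_contra h
      push_neg at h
      have : (ω Φ).re ≤ ((ω Φ).re + M) / 2 := h1 _ (by linarith)
      linarith
  -- decompose Ψ into real and imaginary parts
  intro Ψ hΨ
  obtain ⟨C, hC⟩ := hbdd Ψ hΨ
  have hbA : BddAbove (Set.range fun x => ‖Ψ x‖) :=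
    ⟨C, by rintro _ ⟨x, rfl⟩; exact hC x⟩
  set N : ℝ := ⨆ x : X, ‖Ψ x‖ with hN
  have hNle : ∀ x, ‖Ψ x‖ ≤ N := fun x => le_ciSup hbA x
  have hconjΨ := hconj Ψ hΨ
  set Φ₁ : X → ℂ := fun x => ((Ψ x).re : ℂ) with hΦ₁def
  set Φ₂ : X → ℂ := fun x => ((Ψ x).im : ℂ) with hΦ₂def
  have hΦ₁eq : Φ₁ = (2⁻¹ : ℂ) • (Ψ + fun x => (starRingEnd ℂ) (Ψ x)) := by
    funext x
    simp only [hΦ₁def, Pi.smul_apply, Pi.add_apply, smul_eq_mul]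
    rw [Complex.add_conj]
    push_cast
    ring
  have hΦ₂eq : Φ₂ = (-(Complex.I) / 2) • (Ψ - fun x => (starRingEnd ℂ) (Ψ x)) := by
    funext x
    simp only [hΦ₂def, Pi.smul_apply, Pi.sub_apply, smul_eq_mul]
    rw [Complex.sub_conj]
    have : Complex.I * Complex.I = -1 := Complex.I_mul_I
    field_simp
    push_cast
    linear_combination (2 * (Ψ x).im : ℂ) * this
  have hΦ₁A : Φ₁ ∈ A := by rw [hΦ₁eq]; exact A.smul_mem (A.add_mem hΨ hconjΨ) _
  have hΦ₂A : Φ₂ ∈ A := by rw [hΦ₂eq]; exact A.smul_mem (A.sub_mem hΨ hconjΨ) _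
  have hb1 := hreal Φ₁ hΦ₁A (fun x => by simp [hΦ₁def])
  have hb2 := hreal Φ₂ hΦ₂A (fun x => by simp [hΦ₂def])
  have hsup1 : (⨆ x : X, ‖Φ₁ x‖) ≤ N := by
    apply ciSup_le
    intro x
    calc ‖Φ₁ x‖ = |(Ψ x).re| := by simp [hΦ₁def]
      _ ≤ ‖Ψ x‖ := Complex.abs_re_le_norm _
      _ ≤ N := hNle x
  have hsup2 : (⨆ x : X, ‖Φ₂ x‖) ≤ N := by
    apply ciSup_le
    intro x
    calc ‖Φ₂ x‖ = |(Ψ x).im| := by simp [hΦ₂def]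
      _ ≤ ‖Ψ x‖ := Complex.abs_im_le_norm _
      _ ≤ N := hNle x
  have hdecomp : Ψ = Complex.I • Φ₂ + Φ₁ := by
    funext x
    simp only [Pi.add_apply, Pi.smul_apply, hΦ₁def, hΦ₂def, smul_eq_mul]
    rw [mul_comm, add_comm]
    exact (Complex.re_add_im _).symm
  have hωΨ : ω Ψ = Complex.I * ω Φ₂ + ω Φ₁ := by
    rw [hdecomp]; exact hlin Complex.I Φ₂ hΦ₂A Φ₁ hΦ₁A
  calc ‖ω Ψ‖ ≤ ‖Complex.I * ω Φ₂‖ + ‖ω Φ₁‖ := by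
        rw [hωΨ]; exact norm_add_le _ _
    _ = ‖ω Φ₂‖ + ‖ω Φ₁‖ := by simp
    _ ≤ N + N := add_le_add (le_trans hb2 hsup2) (le_trans hb1 hsup1)
    _ = 2 * N := by ring
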